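/- In the silo graph G_d (d ≥ 3), every vertex (a,b) has distance at most d-2 to some vertex in the set {(1,2)} ∪ {(i,1) : 2 ≤ i ≤ d}. -/

import Mathlib

/-- A valid vertex of the `d`-th silo graph: a pair of distinct elements of `{1,…,d}`. -/
def siloValid (d : ℕ) (p : ℕ × ℕ) : Prop :=
  1 ≤ p.1 ∧ p.1 ≤ d ∧ 1 ≤ p.2 ∧ p.2 ≤ d ∧ p.1 ≠ p.2

/-- One direction of the silo graph adjacency (from the lower second coordinate up). -/
def siloStep (p q : ℕ × ℕ) : Prop :=
  (p.1 ≠ q.1 ∧ p.2 = q.2) ∨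
  (q.2 = p.2 + 1 ∧ q.1 = p.1 ∧ p.2 ≠ p.1 - 1) ∨
  (q.2 = p.2 + 2 ∧ q.1 = p.1 ∧ p.2 = p.1 - 1)

/-- The `d`-th silo graph `G_d`. -/
def siloGraph (d : ℕ) : SimpleGraph (ℕ × ℕ) where
  Adj p q := siloValid d p ∧ siloValid d q ∧ (siloStep p q ∨ siloStep q p)
  symm := ⟨fun p q h => ⟨h.2.1, h.1, h.2.2.symm⟩⟩
  loopless := ⟨by
    rintro p ⟨_, _, h | h⟩ <;>
      rcases h with ⟨h1, h2⟩ | ⟨h1, _, _⟩ | ⟨h1, _, _⟩ <;> omega⟩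

lemma silo_descend (d a : ℕ) (ha : 2 ≤ a) (had : a ≤ d) :
    ∀ b, 1 ≤ b → b ≤ d → a ≠ b →
    ∃ p : (siloGraph d).Walk (a, b) (a, 1),
      p.length ≤ (if a < b then b - 2 else b - 1) := by
  intro b
  induction b using Nat.strong_induction_on with
  | _ b ih =>
    intro hb1 hbd hab
    rcases Nat.lt_or_ge b 2 with h2 | h2
    · have : b = 1 := by omega
      subst this
      exact ⟨SimpleGraph.Walk.nil, by simp⟩
    · by_cases hba : b = a + 1
      · have hadj : (siloGraph d).Adj (a, b) (a, a - 1) := by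
          refine ⟨⟨?_, ?_, ?_, ?_, ?_⟩, ⟨?_, ?_, ?_, ?_, ?_⟩,
            Or.inr (Or.inr (Or.inr ⟨?_, rfl, ?_⟩))⟩ <;> simp <;> omega
        obtain ⟨p, hp⟩ := ih (a - 1) (by omega) (by omega) (by omega) (by omega)
        refine ⟨SimpleGraph.Walk.cons hadj p, ?_⟩
        simp only [SimpleGraph.Walk.length_cons]
        split_ifs with h
        · split_ifs at hp <;> omega
        · split_ifs at hp <;> omega
      · have hadj : (siloGraph d).Adj (a, b) (a, b - 1) := by
          refine ⟨⟨?_, ?_, ?_, ?_, ?_⟩, ⟨?_, ?_, ?_, ?_, ?_⟩,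
            Or.inr (Or.inr (Or.inl ⟨?_, rfl, ?_⟩))⟩ <;> simp <;> omega
        obtain ⟨p, hp⟩ := ih (b - 1) (by omega) (by omega) (by omega) (by omega)
        refine ⟨SimpleGraph.Walk.cons hadj p, ?_⟩
        simp only [SimpleGraph.Walk.length_cons]
        split_ifs with h
        · split_ifs at hp <;> omega
        · split_ifs at hp <;> omega

lemma silo_descend1 (d : ℕ) (hd : 3 ≤ d) :
    ∀ b, 2 ≤ b → b ≤ d →
    ∃ p : (siloGraph d).Walk (1, b) (1, 2), p.length ≤ b - 2 := by
  intro b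
  induction b using Nat.strong_induction_on with
  | _ b ih =>
    intro hb2 hbd
    rcases Nat.lt_or_ge b 3 with h3 | h3
    · have : b = 2 := by omega
      subst this
      exact ⟨SimpleGraph.Walk.nil, by simp⟩
    · have hadj : (siloGraph d).Adj (1, b) (1, b - 1) := by
        refine ⟨⟨?_, ?_, ?_, ?_, ?_⟩, ⟨?_, ?_, ?_, ?_, ?_⟩,
          Or.inr (Or.inr (Or.inl ⟨?_, rfl, ?_⟩))⟩ <;> simp <;> omega
      obtain ⟨p, hp⟩ := ih (b - 1) (by omega) (by omega) (by omega)
      exact ⟨SimpleGraph.Walk.cons hadj p, by simp only [SimpleGraph.Walk.length_cons]; omega⟩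

/-- every vertex of `G_d` can reach some vertex of
`{(1,2)} ∪ {(i,1) : 2 ≤ i ≤ d}` in at most `d-2` steps. -/
theorem silo_reach_ground (d : ℕ) (hd : 3 ≤ d) (a b : ℕ)
    (h : siloValid d (a, b)) :
    ∃ t : ℕ × ℕ, (t = (1, 2) ∨ (2 ≤ t.1 ∧ t.1 ≤ d ∧ t.2 = 1)) ∧
      ∃ p : (siloGraph d).Walk (a, b) t, p.length ≤ d - 2 := by
  obtain ⟨ha1, had, hb1, hbd, hab⟩ := h
  simp only at ha1 had hb1 hbd hab
  by_cases ha : a = 1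
  · subst ha
    obtain ⟨p, hp⟩ := silo_descend1 d hd b (by omega) hbd
    exact ⟨(1, 2), Or.inl rfl, p, by omega⟩
  · obtain ⟨p, hp⟩ := silo_descend d a (by omega) had b hb1 hbd hab
    refine ⟨(a, 1), Or.inr ⟨by omega, by omega, rfl⟩, p, ?_⟩
    split_ifs at hp <;> omega
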